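/- Let R be a Dyck path avoiding three consecutive north steps NNN. Then the number of diagonal steps of the Motzkin path φ(R) equals ds(R), the number of north steps of R that are neither immediately preceded nor immediately followed by another north step. -/
import Mathlib


/-- Steps: north `N = (0,1)`, east `E = (1,0)`, diagonal `D = (1,1)`. -/
inductive MStep : Type
  | N | E | D
  deriving DecidableEq

/-- The contribution of a step to the height `y - x` above the diagonal. -/
def MStep.hdiff : MStep → ℤ
  | .N => 1
  | .E => -1
  | .D => 0

/-- The total height change `y - x` along a word of steps. -/
def wsum (p : List MStep) : ℤ := (p.map MStep.hdiff).sum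

/-- A (nonempty) Motzkin path: starts at the origin, never goes below the
diagonal `y = x`, and ends on the diagonal. -/
def IsMotzkin (p : List MStep) : Prop :=
  p ≠ [] ∧ (∀ q, q <+: p → 0 ≤ wsum q) ∧ wsum p = 0

/-- A Dyck path is a Motzkin path with no diagonal step. -/
def IsDyck (p : List MStep) : Prop := IsMotzkin p ∧ MStep.D ∉ p

/-- A path is primitive if it touches the diagonal only at its endpoints. -/
def IsPrimitive (p : List MStep) : Prop :=
  IsMotzkin p ∧ ∀ q, q <+: p → q ≠ [] → q ≠ p → 0 < wsum q

/-- Covering relation for the Tamari-type order on Motzkin paths: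
`Q` covers `P` iff `P = P₁·E·P₂·P₃` and `Q = P₁·P₂·E·P₃` with `P₂` a nonempty
primitive Motzkin path. -/
def MCover (P Q : List MStep) : Prop :=
  ∃ P₁ P₂ P₃ : List MStep, IsMotzkin P₂ ∧ IsPrimitive P₂ ∧
    P = P₁ ++ [MStep.E] ++ P₂ ++ P₃ ∧ Q = P₁ ++ P₂ ++ [MStep.E] ++ P₃

/-- Covering relation of the Tamari order on Dyck paths. -/
def DCover (P Q : List MStep) : Prop :=
  ∃ P₁ P₂ P₃ : List MStep, IsDyck P₂ ∧ IsPrimitive P₂ ∧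
    P = P₁ ++ [MStep.E] ++ P₂ ++ P₃ ∧ Q = P₁ ++ P₂ ++ [MStep.E] ++ P₃

/-- The partial order `≤_M` on Motzkin paths. -/
def MLE : List MStep → List MStep → Prop := Relation.ReflTransGen MCover

/-- The Tamari order `≤_D` on Dyck paths. -/
def DLE : List MStep → List MStep → Prop := Relation.ReflTransGen DCover

/-- Heights of the diagonal steps along a path, starting from height `h`. -/
def clsFrom : List MStep → ℤ → List ℤ
  | [], _ => []
  | .N :: rest, h => clsFrom rest (h + 1)
  | .E :: rest, h => clsFrom rest h
  | .D :: rest, h => (h + 1) :: clsFrom rest (h + 1)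

/-- The class of a Motzkin path: the sequence of heights (ending `y`-coordinates)
of its diagonal steps, in the order they occur. -/
def cls (p : List MStep) : List ℤ := clsFrom p 0

/-- A path avoids `NNN` if it has no three consecutive north steps. -/
def AvoidsNNN (p : List MStep) : Prop := ¬ ([MStep.N, MStep.N, MStep.N] <:+: p)

/-- Callan's bijection `φ`: replace each factor `NE` by `D` and each factor
`NNE` by `N`, leaving remaining east steps unchanged. -/
def phi : List MStep → List MStep
  | [] => []
  | .N :: .N :: .E :: rest => .N :: phi rest
  | .N :: .E :: rest => .D :: phi rest
  | s :: rest => s :: phi rest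

/-- The inverse of `φ`: replace each `D` by `NE` and each `N` by `NNE`. -/
def psi : List MStep → List MStep
  | [] => []
  | .N :: rest => .N :: .N :: .E :: psi rest
  | .D :: rest => .N :: .E :: psi rest
  | .E :: rest => .E :: psi rest

/-- For each north step of the path (in order), record `N` if it is immediately
followed by an east step and `E` otherwise. -/
def typeRaw : List MStep → List MStep
  | [] => []
  | .N :: rest => (if rest.head? = some MStep.E then MStep.N else MStep.E) :: typeRaw rest
  | _ :: rest => typeRaw rest

/-- The type of a Dyck path of length `2n`: the word of length `n - 1` whose
`i`-th letter is `N` iff the `i`-th north step is immediately followed by an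
east step (the letter of the last north step is dropped). -/
def typeW (p : List MStep) : List MStep := (typeRaw p).dropLast

/-- `ds p` is the number of north steps of `p` that are neither immediately
preceded nor immediately followed by another north step. -/
def ds (p : List MStep) : ℕ :=
  ((Finset.range p.length).filter (fun i =>
    p[i]? = some MStep.N ∧ p[i + 1]? ≠ some MStep.N ∧
      (i = 0 ∨ p[i - 1]? ≠ some MStep.N))).card

/-- The number of contacts of a path with the diagonal `y = x` (lattice points
of the path lying on the diagonal, endpoints included). -/
def cont (p : List MStep) : ℕ :=
  ((Finset.range (p.length + 1)).filter (fun i => wsum (p.take i) = 0)).card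

/-- Auxiliary count: `gaux o p` counts north steps of `p` that are isolated,
where `o` records the previous letter (`none` at the start). -/
def gaux : Option MStep → List MStep → ℕ
  | _, [] => 0
  | o, .N :: rest =>
      (if o ≠ some MStep.N ∧ rest.head? ≠ some MStep.N then 1 else 0) +
        gaux (some MStep.N) rest
  | _, x :: rest => gaux (some x) rest

/-- `ds` with a recorded previous letter. -/
def dsO (o : Option MStep) (p : List MStep) : ℕ :=
  ((Finset.range p.length).filter (fun i =>
    p[i]? = some MStep.N ∧ p[i + 1]? ≠ some MStep.N ∧
      ((i = 0 ∧ o ≠ some MStep.N) ∨ (i ≠ 0 ∧ p[i - 1]? ≠ some MStep.N)))).card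

lemma ds_eq_dsO (p : List MStep) : ds p = dsO none p := by
  unfold ds dsO
  congr 1
  apply Finset.filter_congr
  intro i _
  rcases Nat.eq_zero_or_pos i with h | h
  · subst h; simp
  · have : i ≠ 0 := Nat.pos_iff_ne_zero.mp h
    simp [this]

lemma dsO_cons (o : Option MStep) (x : MStep) (p : List MStep) :
    dsO o (x :: p) =
      (if x = MStep.N ∧ p.head? ≠ some MStep.N ∧ o ≠ some MStep.N then 1 else 0) +
        dsO (some x) p := by
  unfold dsO
  rw [Finset.card_filter, Finset.card_filter]
  rw [List.length_cons, Finset.sum_range_succ']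
  rw [add_comm]
  congr 1
  · simp [List.head?_eq_getElem?]
  · apply Finset.sum_congr rfl
    intro i _
    congr 1
    have h1 : (x :: p)[i + 1]? = p[i]? := by simp
    have h2 : (x :: p)[i + 1 + 1]? = p[i + 1]? := by simp
    have h3 : (x :: p)[i + 1 - 1]? = (x :: p)[i]? := rfl
    rw [h1, h2, h3]
    rcases Nat.eq_zero_or_pos i with h | h
    · subst h
      simp [eq_iff_iff]
      try tauto
    · have hi : i ≠ 0 := Nat.pos_iff_ne_zero.mp h
      obtain ⟨j, rfl⟩ := Nat.exists_eq_succ_of_ne_zero hi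
      simp

lemma dsO_eq_gaux (p : List MStep) : ∀ o, dsO o p = gaux o p := by
  induction p with
  | nil => intro o; simp [dsO, gaux]
  | cons x rest ih =>
    intro o
    rw [dsO_cons, ih]
    cases x with
    | N => simp only [gaux]; congr 1; by_cases h : o = some MStep.N <;> simp [h] <;> try tauto
    | E => simp [gaux]
    | D => simp [gaux]

lemma infix_of_suffix_aux {l p : List MStep} (s : List MStep)
    (h : l <:+: p) : l <:+: s ++ p := by
  obtain ⟨a, b, rfl⟩ := h
  exact ⟨s ++ a, b, by simp⟩

lemma phi_count_aux : ∀ p : List MStep, MStep.D ∉ p → AvoidsNNN p →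
    p.getLast? ≠ some MStep.N → ∀ o, o ≠ some MStep.N →
    (phi p).count MStep.D = gaux o p := by
  intro p
  induction p using phi.induct with
  | case1 =>
    intro _ _ _ o _
    simp [phi, gaux]
  | case2 rest ih =>
    intro hD hA hL o ho
    have hD' : MStep.D ∉ rest := fun h => hD (by simp [h])
    have hA' : AvoidsNNN rest := fun h => hA (infix_of_suffix_aux [MStep.N, MStep.N, MStep.E] h)
    have hL' : rest.getLast? ≠ some MStep.N := by
      cases rest with
      | nil => simp
      | cons a l =>
        simpa [List.getLast?_cons_cons] using hL
    have := ih hD' hA' hL' (some MStep.E) (by simp)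
    simp only [phi, gaux, List.count_cons]
    simp [this]
  | case3 rest ih =>
    intro hD hA hL o ho
    have hD' : MStep.D ∉ rest := fun h => hD (by simp [h])
    have hA' : AvoidsNNN rest := fun h => hA (infix_of_suffix_aux [MStep.N, MStep.E] h)
    have hL' : rest.getLast? ≠ some MStep.N := by
      cases rest with
      | nil => simp
      | cons a l => simpa [List.getLast?_cons_cons] using hL
    have := ih hD' hA' hL' (some MStep.E) (by simp)
    simp only [phi, gaux, List.count_cons]
    simp [this, ho, Nat.add_comm]
  | case4 s rest h1 h2 ih =>
    intro hD hA hL o ho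
    have hD' : MStep.D ∉ rest := fun h => hD (by simp [h])
    have hA' : AvoidsNNN rest := fun h => hA (infix_of_suffix_aux [s] h)
    have hL' : rest.getLast? ≠ some MStep.N := by
      cases rest with
      | nil =>
        simp
      | cons a l => simpa [List.getLast?_cons_cons] using hL
    cases s with
    | D => exact absurd (by simp) hD
    | E =>
      have := ih hD' hA' hL' (some MStep.E) (by simp)
      simp only [phi, gaux, List.count_cons]
      simp [this]
    | N =>
      -- rest must start with N (not E by h2, not D, not empty by hL),
      -- then next must be E (else NNN or bad end), contradicting h1.
      cases rest with
      | nil => exact (hL (by decide)).elim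
      | cons a l =>
        cases a with
        | E => exact (h2 l rfl rfl).elim
        | D => exact absurd (by simp) hD
        | N =>
          cases l with
          | nil => exact (hL (by decide)).elim
          | cons b m =>
            cases b with
            | E => exact (h1 m rfl rfl).elim
            | D => exact absurd (by simp) hD
            | N =>
              exact absurd ⟨[], m, rfl⟩ hA

lemma wsum_append (a b : List MStep) : wsum (a ++ b) = wsum a + wsum b := by
  simp [wsum]

/-- For a Dyck path `R` avoiding `NNN`, the number of
diagonal steps of the Motzkin path `φ R` equals `ds R`, the number of north
steps of `R` neither immediately preceded nor immediately followed by another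
north step. -/
theorem phi_count_diagonal (R : List MStep) (hR : IsDyck R) (hRa : AvoidsNNN R) :
    (phi R).count MStep.D = ds R := by
  obtain ⟨⟨hne, hpre, hz⟩, hD⟩ := hR
  have hL : R.getLast? ≠ some MStep.N := by
    intro h
    obtain ⟨q, rfl⟩ := List.getLast?_eq_some_iff.mp h
    have h1 : 0 ≤ wsum q := hpre q ⟨[MStep.N], rfl⟩
    have h2 : wsum (q ++ [MStep.N]) = wsum q + 1 := by
      rw [wsum_append]; rfl
    omega
  rw [ds_eq_dsO, dsO_eq_gaux]
  exact phi_count_aux R hD hRa hL none (by simp)
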